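/- Let S be a finite-dimensional complex Hilbert space, let ρ be a density operator on S, and let E be a trace-preserving completely positive map on operators on S. Then Λ_max(ρ ‖ E) := inf{ D_max(ρ ‖ τ) : τ a density operator on S with E(τ) = τ } equals 0 if and only if E(ρ) = ρ. -/

import Mathlib

open scoped ComplexOrder

noncomputable section

namespace QIT

variable {n : Type*} [Fintype n] [DecidableEq n]

/-- `x ↦ x·log₂ x` with the convention `0·log 0 = 0`. -/
def xlog (x : ℝ) : ℝ := if x = 0 then 0 else x * Real.logb 2 x

/-- Von Neumann entropy (base 2) of a matrix, via its eigenvalues. -/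
def vN (ρ : Matrix n n ℂ) : ℝ :=
  if h : ρ.IsHermitian then -∑ i, xlog (h.eigenvalues i) else 0

/-- Matrix logarithm (base 2) via functional calculus on the support. -/
def matLog (ρ : Matrix n n ℂ) : Matrix n n ℂ :=
  if h : ρ.IsHermitian then
    (h.eigenvectorUnitary : Matrix n n ℂ) *
      Matrix.diagonal (fun i =>
        ((if h.eigenvalues i = 0 then 0 else Real.logb 2 (h.eigenvalues i) : ℝ) : ℂ)) *
      (star (h.eigenvectorUnitary : Matrix n n ℂ))
  else 0

/-- Support inclusion: `supp ρ ⊆ supp σ` (for PSD matrices: `ker σ ⊆ ker ρ`). -/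
def suppLe (ρ σ : Matrix n n ℂ) : Prop := ∀ v, σ.mulVec v = 0 → ρ.mulVec v = 0

open Classical in
/-- Umegaki relative entropy (base 2), `+∞` if the support condition fails. -/
def relEnt (ρ σ : Matrix n n ℂ) : EReal :=
  if suppLe ρ σ then (((ρ * (QIT.matLog ρ - QIT.matLog σ)).trace.re : ℝ) : EReal) else ⊤

/-- Max-relative entropy `D_max(ρ‖σ) = inf{λ : ρ ≤ 2^λ σ}`, `+∞` if no such λ. -/
def dMax (ρ σ : Matrix n n ℂ) : EReal :=
  sInf {x : EReal | ∃ l : ℝ, x = (l : EReal) ∧ ((2 : ℝ) ^ l • σ - ρ).PosSemidef}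

/-- Partial trace over the first tensor factor. -/
def ptrFst {α β : Type*} [Fintype α] (M : Matrix (α × β) (α × β) ℂ) : Matrix β β ℂ :=
  Matrix.of fun x y => ∑ i, M (i, x) (i, y)

/-- Partial trace over the second tensor factor. -/
def ptrSnd {α β : Type*} [Fintype β] (M : Matrix (α × β) (α × β) ℂ) : Matrix α α ℂ :=
  Matrix.of fun x y => ∑ k, M (x, k) (y, k)

/-- Partial trace over the third factor of a tripartite system. -/
def ptrC3 {α β γ : Type*} [Fintype γ] (M : Matrix (α × β × γ) (α × β × γ) ℂ) :
    Matrix (α × β) (α × β) ℂ :=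
  Matrix.of fun x y => ∑ k, M (x.1, x.2, k) (y.1, y.2, k)

/-- Conditional mutual information `I(A:C|B) = H(AB) + H(BC) - H(B) - H(ABC)`. -/
def cmi {α β γ : Type*} [Fintype α] [Fintype β] [Fintype γ]
    [DecidableEq α] [DecidableEq β] [DecidableEq γ]
    (ρ : Matrix (α × β × γ) (α × β × γ) ℂ) : ℝ :=
  vN (ptrC3 ρ) + vN (ptrFst ρ) - vN (ptrSnd (ptrFst ρ)) - vN ρ

/-- Tensoring a map on the second factor with the identity on the first factor. -/
def tensorId {k b b' : Type*} (Φ : Matrix b b ℂ → Matrix b' b' ℂ)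
    (M : Matrix (k × b) (k × b) ℂ) : Matrix (k × b') (k × b') ℂ :=
  Matrix.of fun x y => Φ (Matrix.of fun u v => M (x.1, u) (y.1, v)) x.2 y.2

/-- A quantum channel: linear, trace preserving and completely positive. -/
def IsCPTP {b b' : Type*} [Fintype b] [Fintype b']
    (Φ : Matrix b b ℂ →ₗ[ℂ] Matrix b' b' ℂ) : Prop :=
  (∀ M, (Φ M).trace = M.trace) ∧
    ∀ (k : ℕ) (M : Matrix (Fin k × b) (Fin k × b) ℂ), M.PosSemidef →
      (tensorId (⇑Φ) M).PosSemidef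

/-- `Λ_max(ρ_AB‖E)`: max-relative entropy distance from `ρ_AB` to the states
invariant under `id_A ⊗ E`. -/
def lambdaMax {a b : Type*} [Fintype a] [Fintype b]
    (ρ : Matrix (a × b) (a × b) ℂ) (E : Matrix b b ℂ → Matrix b b ℂ) : EReal :=
  ⨅ τ ∈ {τ : Matrix (a × b) (a × b) ℂ |
      τ.PosSemidef ∧ τ.trace = 1 ∧ tensorId E τ = τ}, dMax ρ τ

end QIT

set_option linter.unusedSectionVars false
namespace QITAux
open QIT Matrix
open scoped ComplexOrder

variable {S : Type*} [Fintype S] [DecidableEq S]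


lemma diag_nonneg' {A : Matrix S S ℂ} (hA : A.PosSemidef) (i : S) : 0 ≤ A i i := by
  have := hA.dotProduct_mulVec_nonneg (Pi.single i 1)
  simpa [Matrix.mulVec_single, dotProduct, Pi.single_apply, apply_ite,
    Finset.sum_ite_eq'] using this

lemma quad_single {A : Matrix S S ℂ} (i j : S) (x y : ℂ) :
    dotProduct (star (Pi.single i x)) (A *ᵥ (Pi.single j y))
      = (starRingEnd ℂ) x * (A i j * y) := by
  simp [Matrix.mulVec_single, dotProduct, Pi.single_apply, apply_ite,
    Finset.sum_ite_eq', mul_assoc]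

lemma trace_re_nonneg' {A : Matrix S S ℂ} (hA : A.PosSemidef) : 0 ≤ A.trace.re := by
  rw [Matrix.trace, Complex.re_sum]
  exact Finset.sum_nonneg fun k _ => (Complex.le_def.mp (diag_nonneg' hA k)).1

lemma diag_re_le_trace {A : Matrix S S ℂ} (hA : A.PosSemidef) (i : S) :
    (A i i).re ≤ A.trace.re := by
  rw [Matrix.trace, Complex.re_sum]
  exact Finset.single_le_sum (fun k _ => (Complex.le_def.mp (diag_nonneg' hA k)).1)
    (Finset.mem_univ i)



lemma abs_entry_le_trace_re {A : Matrix S S ℂ} (hA : A.PosSemidef) (i j : S) :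
    ‖A i j‖ ≤ A.trace.re := by
  by_cases hij : i = j
  · subst hij
    have h0 := Complex.nonneg_iff.mp (diag_nonneg' hA i)
    have habs : ‖A i i‖ = (A i i).re := by
      rw [Complex.norm_def, Complex.normSq_apply, ← h0.2]
      simpa using Real.sqrt_mul_self h0.1
    rw [habs]
    exact diag_re_le_trace hA i
  · by_cases hz0 : A i j = 0
    · rw [hz0]; simpa using trace_re_nonneg' hA
    · set z := A i j with hzdef
      obtain ⟨c, hzc, hcc, hc2⟩ : ∃ c : ℂ, z * c = -‖z‖ ∧
          (starRingEnd ℂ) c * (starRingEnd ℂ) z = -‖z‖ ∧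
          (starRingEnd ℂ) c * c = 1 := by
        refine ⟨-(starRingEnd ℂ) z / ‖z‖, ?_, ?_, ?_⟩
        · have habs : (‖z‖ : ℂ) ≠ 0 := by simpa using hz0
          have hmc : z * (starRingEnd ℂ) z = (‖z‖ : ℂ) * ‖z‖ := by
            rw [Complex.mul_conj]
            norm_cast
            rw [← Complex.sq_norm]; ring
          field_simp
          linear_combination (-1) * hmc
        · have habs : (‖z‖ : ℂ) ≠ 0 := by simpa using hz0
          have hmc : z * (starRingEnd ℂ) z = (‖z‖ : ℂ) * ‖z‖ := by
            rw [Complex.mul_conj]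
            norm_cast
            rw [← Complex.sq_norm]; ring
          simp only [map_neg, map_div₀, Complex.conj_conj, Complex.conj_ofReal]
          field_simp
          linear_combination (-1) * hmc
        · have habs : (‖z‖ : ℂ) ≠ 0 := by simpa using hz0
          have hmc : z * (starRingEnd ℂ) z = (‖z‖ : ℂ) * ‖z‖ := by
            rw [Complex.mul_conj]
            norm_cast
            rw [← Complex.sq_norm]; ring
          simp only [map_neg, map_div₀, Complex.conj_conj, Complex.conj_ofReal]
          field_simp
          rw [mul_comm]
          linear_combination hmc
      have hji : A j i = (starRingEnd ℂ) z := by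
        simpa [hzdef] using (congrArg star (hA.1.apply i j)).symm.symm
      have hq := hA.dotProduct_mulVec_nonneg (Pi.single i 1 + Pi.single j c)
      have hexp : dotProduct (star (Pi.single i 1 + Pi.single j c))
          (A *ᵥ (Pi.single i 1 + Pi.single j c))
          = A i i + (A j j * ((starRingEnd ℂ) c * c))
            + (z * c + (starRingEnd ℂ) c * (starRingEnd ℂ) z) := by
        simp only [star_add, Matrix.mulVec_add, dotProduct_add,
          add_dotProduct, quad_single, hji, ← hzdef, _root_.map_one]
        ring
      rw [hexp, hzc, hcc, hc2] at hq
      have hre := (Complex.nonneg_iff.mp hq).1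
      simp only [Complex.add_re, Complex.mul_re, Complex.one_re, Complex.one_im,
        Complex.neg_re, Complex.ofReal_re, mul_one, mul_zero, sub_zero, zero_mul] at hre
      have hsum : (A i i).re + (A j j).re ≤ A.trace.re := by
        rw [Matrix.trace, Complex.re_sum]
        have hp : ({i, j} : Finset S).sum (fun k => (A k k).re)
            = (A i i).re + (A j j).re := Finset.sum_pair hij
        rw [← hp]
        exact Finset.sum_le_sum_of_subset_of_nonneg (Finset.subset_univ _)
          (fun k _ _ => (Complex.nonneg_iff.mp (diag_nonneg' hA k)).1)
      nlinarith [norm_nonneg z]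


lemma cptp_psd (E : Matrix S S ℂ →ₗ[ℂ] Matrix S S ℂ) (hE : IsCPTP E)
    {σ : Matrix S S ℂ} (hσ : σ.PosSemidef) : (E σ).PosSemidef := by
  have h1 : ((σ.submatrix (Prod.snd : Fin 1 × S → S) Prod.snd)).PosSemidef :=
    hσ.submatrix _
  have h2 := hE.2 1 _ h1
  have h3 : tensorId (⇑E) (σ.submatrix (Prod.snd : Fin 1 × S → S) Prod.snd)
      = (E σ).submatrix (Prod.snd : Fin 1 × S → S) Prod.snd := by
    ext x y
    rfl
  rw [h3] at h2
  have h4 := h2.submatrix (fun u : S => ((0 : Fin 1), u))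
  simpa [Matrix.submatrix_submatrix, Function.comp] using h4

lemma dMax_nonneg {ρ τ : Matrix S S ℂ} (hρ1 : ρ.trace = 1) (hτ1 : τ.trace = 1) :
    0 ≤ dMax ρ τ := by
  refine le_sInf ?_
  rintro x ⟨l, rfl, hl⟩
  have htr : ((2 : ℝ) ^ l • τ - ρ).trace = (((2 : ℝ) ^ l - 1 : ℝ) : ℂ) := by
    rw [Matrix.trace_sub, Matrix.trace_smul, hτ1, hρ1]
    push_cast
    simp
  have h0 : (0:ℝ) ≤ (2 : ℝ) ^ l - 1 := by
    have := trace_re_nonneg' hl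
    rw [htr] at this
    simpa using this
  have hl0 : (0:ℝ) ≤ l := by
    by_contra hneg
    push_neg at hneg
    have : (2:ℝ) ^ l < 1 := by
      simpa using Real.rpow_lt_one_of_one_lt_of_neg (by norm_num : (1:ℝ) < 2) hneg
    linarith
  exact_mod_cast EReal.coe_nonneg.mpr hl0

end QITAux


open QIT in
/-- `Λ_max(ρ‖E) = 0` if and only if `E(ρ) = ρ`, for a quantum
channel `E` on a finite-dimensional system. -/
theorem lambdaMax_eq_zero_iff_fixed {S : Type*} [Fintype S] [DecidableEq S]
    (ρ : Matrix S S ℂ) (hρ : ρ.PosSemidef) (hρ1 : ρ.trace = 1)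
    (E : Matrix S S ℂ →ₗ[ℂ] Matrix S S ℂ) (hE : IsCPTP E) :
    (⨅ τ ∈ {τ : Matrix S S ℂ | τ.PosSemidef ∧ τ.trace = 1 ∧ E τ = τ}, dMax ρ τ) = 0
      ↔ E ρ = ρ := by
  classical
  open QITAux in
  constructor
  · intro h0
    have key : ∀ ε : ℝ, 0 < ε → ∀ i j,
        ‖(E ρ - ρ) i j‖ ≤ 2 * ((2:ℝ) ^ ε - 1) := by
      intro ε hε i j
      have hlt : (⨅ τ ∈ {τ : Matrix S S ℂ | τ.PosSemidef ∧ τ.trace = 1 ∧ E τ = τ},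
          dMax ρ τ) < (ε : EReal) := by
        rw [h0]
        exact_mod_cast hε
      obtain ⟨τ, hτlt⟩ := iInf_lt_iff.mp hlt
      obtain ⟨hτ, hdlt⟩ := iInf_lt_iff.mp hτlt
      obtain ⟨hτpsd, hτ1, hτfix⟩ := hτ
      obtain ⟨x, ⟨l, rfl, hlpsd⟩, hxlt⟩ := sInf_lt_iff.mp hdlt
      have hlε : l ≤ ε := le_of_lt (by exact_mod_cast hxlt)
      set σ := (2 : ℝ) ^ l • τ - ρ with hσdef
      have htrσ : σ.trace = (((2 : ℝ) ^ l - 1 : ℝ) : ℂ) := by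
        rw [hσdef, Matrix.trace_sub, Matrix.trace_smul, hτ1, hρ1]
        push_cast
        simp
      have hEσ : (E σ).PosSemidef := cptp_psd E hE hlpsd
      have htrEσ : (E σ).trace = σ.trace := hE.1 σ
      have hEρρ : E ρ - ρ = σ - E σ := by
        have hsm : ((2:ℝ) ^ l • τ : Matrix S S ℂ) = (((2:ℝ) ^ l : ℝ) : ℂ) • τ := by
          ext a b
          simp [Complex.real_smul]
        have hρeq : ρ = (((2 : ℝ) ^ l : ℝ) : ℂ) • τ - σ := by
          rw [hσdef, ← hsm]
          abel
        rw [hρeq, map_sub, map_smul, hτfix]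
        abel
      have hb1 : ‖σ i j‖ ≤ (2:ℝ) ^ l - 1 := by
        have := abs_entry_le_trace_re hlpsd i j
        rwa [htrσ, Complex.ofReal_re] at this
      have hb2 : ‖(E σ) i j‖ ≤ (2:ℝ) ^ l - 1 := by
        have := abs_entry_le_trace_re hEσ i j
        rwa [htrEσ, htrσ, Complex.ofReal_re] at this
      have hmono : (2:ℝ) ^ l ≤ (2:ℝ) ^ ε :=
        Real.rpow_le_rpow_left_iff (by norm_num : (1:ℝ) < 2) |>.mpr hlε
      calc ‖(E ρ - ρ) i j‖ = ‖σ i j - (E σ) i j‖ := by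
            rw [hEρρ]; rfl
        _ ≤ ‖σ i j‖ + ‖(E σ) i j‖ := by
            simpa [sub_eq_add_neg, map_neg] using norm_add_le (σ i j) (-((E σ) i j))
        _ ≤ 2 * ((2:ℝ) ^ l - 1) := by linarith
        _ ≤ 2 * ((2:ℝ) ^ ε - 1) := by linarith
    have hzero : E ρ - ρ = 0 := by
      ext i j
      rw [Matrix.zero_apply]
      by_contra hne
      have hpos : 0 < ‖(E ρ - ρ) i j‖ := by
        simpa [norm_pos_iff] using hne
      set a := ‖(E ρ - ρ) i j‖ with ha
      have hεpos : 0 < Real.logb 2 (1 + a / 4) :=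
        Real.logb_pos (by norm_num) (by linarith)
      have hk := key _ hεpos i j
      rw [Real.rpow_logb (by linarith) (by norm_num) (by linarith)] at hk
      rw [← ha] at hk
      linarith
    exact sub_eq_zero.mp hzero
  · intro hfix
    apply le_antisymm
    · refine le_trans (biInf_le _ (⟨hρ, hρ1, hfix⟩ :
        ρ ∈ {τ : Matrix S S ℂ | τ.PosSemidef ∧ τ.trace = 1 ∧ E τ = τ})) ?_
      refine sInf_le ⟨0, by norm_num, ?_⟩
      have : (2:ℝ) ^ (0:ℝ) • ρ - ρ = 0 := by
        rw [Real.rpow_zero, one_smul, sub_self]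
      rw [this]
      exact Matrix.PosSemidef.zero
    · exact le_iInf₂ fun τ hτ => dMax_nonneg hρ1 hτ.2.1
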